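/- arXiv:1910.10290 — 3 statements merged into one kernel-verified Lean document; each statement's English description precedes it below -/
import Mathlib

section
/- For all integers j < k, cos(α_k) · G(j,k-1) < G(j,k). -/
/-- Auxiliary recursion: `Gaux s α j n` corresponds to `G(j, j-1+n)`. -/
noncomputable def Gaux (s α : ℤ → ℝ) (j : ℤ) : ℕ → ℝ
  | 0 => 0
  | 1 => 1
  | (n+2) => (2 * s (j + n) + Real.cos (α (j + n)) + Real.cos (α (j + n + 1))) * Gaux s α j (n+1)
      - (Real.cos (α (j + n)))^2 * Gaux s α j n

/-- `G s α j k` is the recursively defined quantity `G(j,k)`, with `G(j,j-1)=0`, `G(j,j)=1`,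
`G(j,k) = (2 s_{k-1} + cos α_{k-1} + cos α_k) G(j,k-1) − cos²(α_{k-1}) G(j,k-2)` for `k ≥ j+1`. -/
noncomputable def G (s α : ℤ → ℝ) (j k : ℤ) : ℝ := Gaux s α j (k - (j-1)).toNat

/-- `Pprod α a b = ∏_{i=a}^{b-1} cos (α i)`. -/
noncomputable def Pprod (α : ℤ → ℝ) (a b : ℤ) : ℝ := ∏ i ∈ Finset.Ico a b, Real.cos (α i)

lemma Gaux_key (s α : ℤ → ℝ) (hs : ∀ i, 0 < s i) (hα : ∀ i, 0 < Real.cos (α i))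
    (j : ℤ) : ∀ n : ℕ, 0 < Gaux s α j (n+1) ∧
      Real.cos (α (j + n + 1)) * Gaux s α j (n+1) < Gaux s α j (n+2) := by
  intro n
  induction n with
  | zero =>
    refine ⟨by norm_num [Gaux], ?_⟩
    show Real.cos (α (j + (0:ℕ) + 1)) * Gaux s α j 1 < Gaux s α j 2
    simp only [Gaux]
    push_cast
    nlinarith [hs (j+0), hα (j+0), hα (j+0+1)]
  | succ m ih =>
    obtain ⟨h1, h2⟩ := ih
    have hc1 := hα (j + m + 1)
    have hc2 := hα (j + (m+1:ℕ) + 1)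
    have hpos : 0 < Gaux s α j (m+2) := lt_trans (by positivity) h2
    refine ⟨hpos, ?_⟩
    show Real.cos (α (j + (m+1:ℕ) + 1)) * Gaux s α j (m+2) < Gaux s α j (m+3)
    have hrec : Gaux s α j (m+3) =
        (2 * s (j + (m+1:ℕ)) + Real.cos (α (j + (m+1:ℕ))) + Real.cos (α (j + (m+1:ℕ) + 1)))
          * Gaux s α j (m+2) - (Real.cos (α (j + (m+1:ℕ))))^2 * Gaux s α j (m+1) := rfl
    have hcast : (j + (m+1:ℕ) : ℤ) = j + m + 1 := by push_cast; ring
    rw [hrec, hcast]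
    nlinarith [hs (j + m + 1)]

theorem stmt2 (s α : ℤ → ℝ) (hs : ∀ i, 0 < s i) (hα : ∀ i, 0 < Real.cos (α i))
    (j k : ℤ) (hjk : j < k) :
    Real.cos (α k) * G s α j (k-1) < G s α j k := by
  obtain ⟨m, hm⟩ : ∃ m : ℕ, k - j = m + 1 := by
    refine ⟨(k - j - 1).toNat, ?_⟩
    have : (0:ℤ) ≤ k - j - 1 := by omega
    omega
  have h1 : (k - 1 - (j - 1)).toNat = m + 1 := by omega
  have h2 : (k - (j - 1)).toNat = m + 2 := by omega
  have h3 : k = j + m + 1 := by omega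
  have := (Gaux_key s α hs hα j m).2
  rw [G, G, h1, h2, h3]
  exact this
end

section
/- For all integers j < k, the matrix product M_{k-1} · M_{k-2} · ⋯ · M_j equals ((−1)^{k−j} / Π(j+1,k+1)) · [[G(j,k), cos α_j · G(j+1,k)], [−cos α_k · G(j,k-1), −cos α_j · cos α_k · G(j+1,k-1)]], where M_i := −sec(α_{i+1}) · [[2 s_i + cos α_i + cos α_{i+1}, cos α_i], [−cos α_{i+1}, 0]]. -/
/-- The Jacobian `M_i` of the billiard collision map in `(ω_i, ω_{i-1})` coordinates. -/
noncomputable def Mmat (s α : ℤ → ℝ) (i : ℤ) : Matrix (Fin 2) (Fin 2) ℝ :=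
  (-(Real.cos (α (i+1)))⁻¹) •
    !![2 * s i + Real.cos (α i) + Real.cos (α (i+1)), Real.cos (α i);
       -Real.cos (α (i+1)), 0]

/-- `MprodAux s α j n = M_{j+n-1} ⋯ M_{j+1} M_j`. -/
noncomputable def MprodAux (s α : ℤ → ℝ) (j : ℤ) : ℕ → Matrix (Fin 2) (Fin 2) ℝ
  | 0 => 1
  | (n+1) => Mmat s α (j + n) * MprodAux s α j n

/-- `Mprod s α j k = M_{k-1} ⋯ M_{j+1} M_j`. -/
noncomputable def Mprod (s α : ℤ → ℝ) (j k : ℤ) : Matrix (Fin 2) (Fin 2) ℝ :=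
  MprodAux s α j (k - j).toNat

lemma prodStep (α : ℤ → ℝ) (a b : ℤ) (h : a ≤ b) :
    Pprod α a (b+1) = Pprod α a b * Real.cos (α b) := by
  have : Finset.Ico a (b+1) = insert b (Finset.Ico a b) := by
    ext x; simp; omega
  rw [Pprod, Pprod, this, Finset.prod_insert (by simp), mul_comm]

lemma key (s α : ℤ → ℝ) (hα : ∀ i, Real.cos (α i) ≠ 0) (j : ℤ) : ∀ n : ℕ,
    MprodAux s α j (n+1) = ((-1:ℝ)^(n+1) / Pprod α (j+1) (j+n+2)) •
      !![Gaux s α j (n+2), Real.cos (α j) * Gaux s α (j+1) (n+1);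
         -Real.cos (α (j+n+1)) * Gaux s α j (n+1),
         -Real.cos (α j) * Real.cos (α (j+n+1)) * Gaux s α (j+1) n]
  | 0 => by
      have hP : Pprod α (j+1) (j+(0:ℕ)+2) = Real.cos (α (j+1)) := by
        rw [show j+((0:ℕ):ℤ)+2 = (j+1)+1 by push_cast; ring, prodStep α _ _ le_rfl]
        simp [Pprod]
      rw [show MprodAux s α j (0+1) = Mmat s α (j + ((0:ℕ):ℤ)) * MprodAux s α j 0 from rfl,
        show MprodAux s α j 0 = 1 from rfl, Matrix.mul_one, hP, Mmat]
      have g1 : Gaux s α j (0+2) = (2 * s (j + (0:ℕ)) + Real.cos (α (j + (0:ℕ))) + Real.cos (α (j + (0:ℕ) + 1))) * Gaux s α j 1 - (Real.cos (α (j + (0:ℕ))))^2 * Gaux s α j 0 := rfl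
      rw [g1, show Gaux s α j 1 = 1 from rfl, show Gaux s α j 0 = 0 from rfl,
        show Gaux s α (j+1) 1 = 1 from rfl, show Gaux s α (j+1) 0 = 0 from rfl]
      congr 1
      · push_cast
        rw [pow_one, neg_div, ← one_div]
        norm_num
      · ext i l
        fin_cases i <;> fin_cases l <;>
          · simp only [Matrix.cons_val', Matrix.cons_val_zero, Matrix.cons_val_one,
              Matrix.head_cons, Matrix.head_fin_const, Matrix.empty_val',
              Matrix.cons_val_fin_one, Matrix.of_apply]
            push_cast
            ring_nf
  | (n+1) => by
      rw [show MprodAux s α j (n+1+1) = Mmat s α (j + ((n:ℤ)+1)) * MprodAux s α j (n+1) by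
            rw [show MprodAux s α j (n+1+1) = Mmat s α (j + ((n+1:ℕ):ℤ)) * MprodAux s α j (n+1) from rfl]
            norm_num,
          key s α hα j n, Mmat]
      rw [Matrix.smul_mul, Matrix.mul_smul, smul_smul, Matrix.mul_fin_two]
      have hP : Pprod α (j+1) (j+((n:ℤ)+1)+2) = Pprod α (j+1) (j+n+2) * Real.cos (α (j+n+2)) := by
        rw [show j+((n:ℤ)+1)+2 = (j+(n:ℤ)+2)+1 by ring,
          prodStep α _ _ (by linarith [Int.ofNat_nonneg n])]
      rw [show ((j:ℤ) + ((n+1:ℕ):ℤ) + 2) = j+((n:ℤ)+1)+2 by push_cast; ring, hP]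
      congr 1
      · rw [div_mul_eq_div_div]
        rw [show j + ((n:ℤ)+1) + 1 = j + (n:ℤ) + 2 by ring]
        field_simp
        ring
      · have g1 : Gaux s α j (n+3) = (2 * s (j + ((n+1:ℕ):ℤ)) + Real.cos (α (j + ((n+1:ℕ):ℤ))) + Real.cos (α (j + ((n+1:ℕ):ℤ) + 1))) * Gaux s α j (n+2) - (Real.cos (α (j + ((n+1:ℕ):ℤ))))^2 * Gaux s α j (n+1) := rfl
        have g2 : Gaux s α (j+1) (n+2) = (2 * s (j + 1 + (n:ℤ)) + Real.cos (α (j + 1 + (n:ℤ))) + Real.cos (α (j + 1 + (n:ℤ) + 1))) * Gaux s α (j+1) (n+1) - (Real.cos (α (j + 1 + (n:ℤ))))^2 * Gaux s α (j+1) n := rfl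
        rw [show n+1+2 = n+3 from rfl, g1, show n+1+1 = n+2 from rfl, g2]
        ext i l
        fin_cases i <;> fin_cases l <;>
          · simp only [Matrix.cons_val', Matrix.cons_val_zero, Matrix.cons_val_one,
              Matrix.head_cons, Matrix.head_fin_const, Matrix.empty_val',
              Matrix.cons_val_fin_one, Matrix.of_apply]
            push_cast
            ring_nf


theorem stmt10 (s α : ℤ → ℝ) (hα : ∀ i, Real.cos (α i) ≠ 0) (j k : ℤ) (hjk : j < k) :
    Mprod s α j k = (((-1 : ℝ)^(k - j).toNat / Pprod α (j+1) (k+1)) •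
      !![G s α j k, Real.cos (α j) * G s α (j+1) k;
         -Real.cos (α k) * G s α j (k-1),
         -Real.cos (α j) * Real.cos (α k) * G s α (j+1) (k-1)]) := by
  obtain ⟨m, hm⟩ : ∃ m : ℕ, (k - j).toNat = m + 1 := ⟨(k - j).toNat - 1, by omega⟩
  have e1 : G s α j k = Gaux s α j (m+2) := by rw [G]; congr 1; omega
  have e2 : G s α (j+1) k = Gaux s α (j+1) (m+1) := by rw [G]; congr 1; omega
  have e3 : G s α j (k-1) = Gaux s α j (m+1) := by rw [G]; congr 1; omega
  have e4 : G s α (j+1) (k-1) = Gaux s α (j+1) m := by rw [G]; congr 1; omega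
  have ek : k = j + (m:ℤ) + 1 := by omega
  rw [Mprod, hm, key s α hα j m, e1, e2, e3, e4, ek,
    show ((j:ℤ)+(m:ℤ)+1+1) = j+(m:ℤ)+2 by ring]
end

section
/- Let N ≥ 2, all s_i > 0, all cos α_i ∈ (0,1]. Then (G(0,N-1) − cos(α_0) G(1,N-1)) / G(0,N-1) > 2 s_0 / (2 s_0 + cos α_0). -/
lemma Gaux_step (s α : ℤ → ℝ) (j : ℤ) (n : ℕ) :
    Gaux s α j (n+2) = (2 * s (j + n) + Real.cos (α (j + n)) + Real.cos (α (j + n + 1))) * Gaux s α j (n+1)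
      - (Real.cos (α (j + n)))^2 * Gaux s α j n := rfl

lemma Gaux_back (s α : ℤ → ℝ) : ∀ (n : ℕ) (j : ℤ),
    Gaux s α j (n+2) = (2 * s j + Real.cos (α j) + Real.cos (α (j+1))) * Gaux s α (j+1) (n+1)
      - (Real.cos (α (j+1)))^2 * Gaux s α (j+2) n := by
  intro n
  induction n using Nat.strong_induction_on with
  | _ n ih =>
    match n with
    | 0 => intro j; simp [Gaux]
    | 1 => intro j; simp [Gaux]; push_cast; ring
    | (n+2) =>
      intro j
      have h1 := ih (n+1) (by omega) j
      have h0 := ih n (by omega) j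
      have e3 : n + 2 + 1 = n + 1 + 2 := by omega
      rw [Gaux_step s α j (n+2), e3, h1, h0, Gaux_step s α (j+1) (n+1), Gaux_step s α (j+2) n]
      push_cast
      ring

lemma Gaux_pos (s α : ℤ → ℝ)
    (hs : ∀ i, 0 < s i)
    (hα : ∀ i, 0 < Real.cos (α i)) :
    ∀ n : ℕ, (∀ j, 0 ≤ Gaux s α j n) ∧
      (∀ j, Real.cos (α j) * Gaux s α (j+1) n < Gaux s α j (n+1)) := by
  intro n
  induction n with
  | zero => constructor <;> intro j <;> simp [Gaux]
  | succ n ih =>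
    have key : ∀ j, Real.cos (α j) * Gaux s α (j+1) (n+1) < Gaux s α j (n+2) := by
      intro j
      have hb := Gaux_back s α n j
      have h2 := ih.2 (j+1)
      rw [show j+1+1 = j+2 by ring] at h2
      have hX : 0 < Gaux s α (j+1) (n+1) :=
        lt_of_le_of_lt (mul_nonneg (hα (j+1)).le (ih.1 (j+2))) h2
      nlinarith [hα j, hα (j+1), hs j]
    refine ⟨fun j => ?_, key⟩
    have := key j
    have h0 : 0 ≤ Real.cos (α j) * Gaux s α (j+1) n := mul_nonneg (hα j).le (ih.1 (j+1))
    linarith [ih.2 j]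

theorem stmt15 (s α : ℤ → ℝ) (N : ℤ) (hN : 2 ≤ N)
    (hs : ∀ i, 0 < s i)
    (hα : ∀ i, 0 < Real.cos (α i)) (hα' : ∀ i, Real.cos (α i) ≤ 1) :
    (G s α 0 (N-1) - Real.cos (α 0) * G s α 1 (N-1)) / G s α 0 (N-1)
      > 2 * s 0 / (2 * s 0 + Real.cos (α 0)) := by
  obtain ⟨m, rfl⟩ : ∃ m : ℕ, N = (m : ℤ) + 2 := ⟨(N-2).toNat, by omega⟩
  have hG0 : G s α 0 ((m:ℤ)+2-1) = Gaux s α 0 (m+2) := by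
    unfold G; congr 1; omega
  have hG1 : G s α 1 ((m:ℤ)+2-1) = Gaux s α 1 (m+1) := by
    unfold G; congr 1; omega
  set X := Gaux s α 1 (m+1) with hXdef
  set Y := Gaux s α 2 m with hYdef
  have hP := Gaux_pos s α hs hα
  have hXY : Real.cos (α 1) * Y < X := by
    have := (hP m).2 1
    norm_num at this
    exact this
  have hY : 0 ≤ Y := (hP m).1 2
  have hX : 0 < X :=
    lt_of_le_of_lt (mul_nonneg (hα 1).le hY) hXY
  have hb : Gaux s α 0 (m+2) = (2 * s 0 + Real.cos (α 0) + Real.cos (α 1)) * X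
      - (Real.cos (α 1))^2 * Y := by
    have := Gaux_back s α m 0
    norm_num at this
    exact this
  have hGgt : (2 * s 0 + Real.cos (α 0)) * X < Gaux s α 0 (m+2) := by
    nlinarith [hα 1]
  have hGpos : 0 < Gaux s α 0 (m+2) := by
    nlinarith [hs 0, hα 0]
  rw [hG0, hG1, gt_iff_lt, div_lt_div_iff₀ (by nlinarith [hs 0, hα 0]) hGpos]
  nlinarith [hα 0, hs 0]
end
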